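/- Let U be a real symmetric positive semidefinite n×n matrix, and let r ∈ {−1,1}ⁿ be a random vector with independent coordinates each uniform on {−1,1}. Define Y = U^{1/2} r, where U^{1/2} is the positive semidefinite square root of U. Then E[Y_i] = 0 for all i, E[Y_i Y_j] = U_{ij} for all i,j (so E[Y_i²] = U_{ii}), and, if moreover η·diag(U) − U is positive semidefinite for some η ≥ 1, then for every c ∈ ℝⁿ one has E[(Σ_i c_i Y_i)²] ≤ η · Σ_i c_i² · E[Y_i²]. -/

import Mathlib

open MeasureTheory Matrix

/-- The distribution of a single uniform `±1` random sign. -/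
noncomputable def uniformSign : Measure ℝ :=
  (2 : ENNReal)⁻¹ • Measure.dirac (-1 : ℝ) + (2 : ENNReal)⁻¹ • Measure.dirac (1 : ℝ)

open scoped ComplexOrder in
noncomputable def Matrix.PosSemidef.sqrt {n 𝕜 : Type*} [Fintype n] [RCLike 𝕜] [DecidableEq n]
    {A : Matrix n n 𝕜} (hA : A.PosSemidef) : Matrix n n 𝕜 :=
  hA.1.eigenvectorUnitary.1 * diagonal ((↑) ∘ (Real.sqrt ·) ∘ hA.1.eigenvalues) *
  (star hA.1.eigenvectorUnitary : Matrix n n 𝕜)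

instance : IsProbabilityMeasure uniformSign := by
  constructor
  simp [uniformSign]
  rw [ENNReal.inv_two_add_inv_two]

lemma uniformSign_integrable (g : ℝ → ℝ) : Integrable g uniformSign := by
  have h1 : Integrable g (Measure.dirac (-1 : ℝ)) :=
    (integrable_congr (MeasureTheory.ae_eq_dirac g)).mpr (integrable_const _)
  have h2 : Integrable g (Measure.dirac (1 : ℝ)) :=
    (integrable_congr (MeasureTheory.ae_eq_dirac g)).mpr (integrable_const _)
  exact (h1.smul_measure (by simp)).add_measure (h2.smul_measure (by simp))

lemma uniformSign_integral (g : ℝ → ℝ) :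
    ∫ t, g t ∂uniformSign = (g (-1) + g 1) / 2 := by
  have h1 : Integrable g (Measure.dirac (-1 : ℝ)) :=
    (integrable_congr (MeasureTheory.ae_eq_dirac g)).mpr (integrable_const _)
  have h2 : Integrable g (Measure.dirac (1 : ℝ)) :=
    (integrable_congr (MeasureTheory.ae_eq_dirac g)).mpr (integrable_const _)
  rw [uniformSign, integral_add_measure (h1.smul_measure (by simp)) (h2.smul_measure (by simp)),
    integral_smul_measure, integral_smul_measure, integral_dirac, integral_dirac]
  simp [ENNReal.toReal_inv]
  ring

lemma pi_sign_integral_prod {n : ℕ} (f : Fin n → ℝ → ℝ) :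
    ∫ x, ∏ i, f i (x i) ∂(Measure.pi fun _ : Fin n => uniformSign)
      = ∏ i, ∫ t, f i t ∂uniformSign := by
  letI : MeasureSpace ℝ := ⟨uniformSign⟩
  haveI : SigmaFinite (volume : Measure ℝ) := inferInstanceAs (SigmaFinite uniformSign)
  exact integral_fintype_prod_eq_prod f

lemma pi_sign_integrable_prod {n : ℕ} (f : Fin n → ℝ → ℝ) :
    Integrable (fun x => ∏ i, f i (x i)) (Measure.pi fun _ : Fin n => uniformSign) := by
  letI : MeasureSpace ℝ := ⟨uniformSign⟩
  haveI : SigmaFinite (volume : Measure ℝ) := inferInstanceAs (SigmaFinite uniformSign)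
  exact Integrable.fintype_prod (fun i => uniformSign_integrable (f i))

lemma sign_moment2 {n : ℕ} (k l : Fin n) :
    ∫ x, x k * x l ∂(Measure.pi fun _ : Fin n => uniformSign)
      = if k = l then 1 else 0 := by
  have hfun : (fun x : Fin n → ℝ => x k * x l)
      = fun x => ∏ i, (if i = k then x i else 1) * (if i = l then x i else 1) := by
    funext x
    rw [Finset.prod_mul_distrib, Finset.prod_ite_eq', Finset.prod_ite_eq']
    simp
  rw [hfun, pi_sign_integral_prod (fun i t => (if i = k then t else 1) * (if i = l then t else 1))]
  have hint : ∀ i : Fin n, (∫ t, (if i = k then t else 1) * (if i = l then t else 1) ∂uniformSign)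
      = if i = k then (if i = l then 1 else 0) else (if i = l then 0 else 1) := by
    intro i
    rw [uniformSign_integral (fun t => (if i = k then t else 1) * (if i = l then t else 1))]
    split_ifs <;> norm_num
  simp_rw [hint]
  by_cases hkl : k = l
  · subst hkl
    simp only [if_pos rfl]
    rw [Finset.prod_congr rfl (fun i _ => ?_)]
    · exact Finset.prod_const_one
    · split_ifs <;> rfl
  · rw [Finset.prod_eq_zero (Finset.mem_univ k)]
    · simp [hkl]
    · simp [hkl]

lemma sign_integrable2 {n : ℕ} (k l : Fin n) :
    Integrable (fun x : Fin n → ℝ => x k * x l) (Measure.pi fun _ : Fin n => uniformSign) := by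
  have hfun : (fun x : Fin n → ℝ => x k * x l)
      = fun x => ∏ i, (if i = k then x i else 1) * (if i = l then x i else 1) := by
    funext x
    rw [Finset.prod_mul_distrib, Finset.prod_ite_eq', Finset.prod_ite_eq']
    simp
  rw [hfun]
  exact pi_sign_integrable_prod (fun i t => (if i = k then t else 1) * (if i = l then t else 1))

lemma sign_moment1 {n : ℕ} (k : Fin n) :
    ∫ x, x k ∂(Measure.pi fun _ : Fin n => uniformSign) = 0 := by
  have hfun : (fun x : Fin n → ℝ => x k) = fun x => ∏ i, (if i = k then x i else 1) := by
    funext x; rw [Finset.prod_ite_eq']; simp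
  rw [hfun, pi_sign_integral_prod (fun i t => if i = k then t else 1)]
  rw [Finset.prod_eq_zero (Finset.mem_univ k)]
  rw [uniformSign_integral (fun t => if k = k then t else 1)]
  simp

lemma sign_integrable1 {n : ℕ} (k : Fin n) :
    Integrable (fun x : Fin n → ℝ => x k) (Measure.pi fun _ : Fin n => uniformSign) := by
  have hfun : (fun x : Fin n → ℝ => x k) = fun x => ∏ i, (if i = k then x i else 1) := by
    funext x; rw [Finset.prod_ite_eq']; simp
  rw [hfun]
  exact pi_sign_integrable_prod (fun i t => if i = k then t else 1)

lemma sign_bilinear {n : ℕ} (a b : Fin n → ℝ) :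
    ∫ x, (∑ k, a k * x k) * (∑ l, b l * x l) ∂(Measure.pi fun _ : Fin n => uniformSign)
      = ∑ k, a k * b k := by
  set ν := Measure.pi fun _ : Fin n => uniformSign
  have hfun : (fun x : Fin n → ℝ => (∑ k, a k * x k) * (∑ l, b l * x l))
      = fun x => ∑ k, ∑ l, (a k * b l) * (x k * x l) := by
    funext x
    rw [Finset.sum_mul_sum]
    exact Finset.sum_congr rfl fun k _ => Finset.sum_congr rfl fun l _ => by ring
  rw [hfun]
  rw [integral_finset_sum _ (fun k _ => integrable_finset_sum _
    (fun l _ => (sign_integrable2 k l).const_mul _))]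
  have : ∀ k : Fin n, ∫ x, ∑ l, (a k * b l) * (x k * x l) ∂ν = a k * b k := by
    intro k
    rw [integral_finset_sum _ (fun l _ => (sign_integrable2 k l).const_mul _)]
    have : ∀ l : Fin n, ∫ x, (a k * b l) * (x k * x l) ∂ν = (a k * b l) * if k = l then 1 else 0 := by
      intro l
      rw [integral_const_mul, sign_moment2]
    change ∑ l, ∫ x, (a k * b l) * (x k * x l) ∂ν = _
    simp_rw [this, mul_ite, mul_one, mul_zero, Finset.sum_ite_eq, Finset.mem_univ, if_true]
  change ∑ k, ∫ x, ∑ l, (a k * b l) * (x k * x l) ∂ν = _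
  simp_rw [this]

lemma Matrix.PosSemidef.sqrt_isHermitian' {n : ℕ} {A : Matrix (Fin n) (Fin n) ℝ}
    (hA : A.PosSemidef) : hA.sqrt.IsHermitian := by
  unfold Matrix.PosSemidef.sqrt
  simp [IsHermitian, conjTranspose_mul, Matrix.mul_assoc, Unitary.coe_star, Matrix.star_eq_conjTranspose, diagonal_conjTranspose]

lemma Matrix.PosSemidef.sqrt_mul_self {n : ℕ} {A : Matrix (Fin n) (Fin n) ℝ}
    (hA : A.PosSemidef) : hA.sqrt * hA.sqrt = A := by
  unfold Matrix.PosSemidef.sqrt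
  have hV : (star hA.1.eigenvectorUnitary : Matrix (Fin n) (Fin n) ℝ) *
      hA.1.eigenvectorUnitary.1 = 1 := Unitary.coe_star_mul_self _
  have hD : diagonal (RCLike.ofReal ∘ (Real.sqrt ·) ∘ hA.1.eigenvalues) *
      diagonal (RCLike.ofReal ∘ (Real.sqrt ·) ∘ hA.1.eigenvalues)
      = diagonal (RCLike.ofReal ∘ hA.1.eigenvalues : Fin n → ℝ) := by
    rw [diagonal_mul_diagonal]
    congr 1
    funext i
    simp [Real.mul_self_sqrt (hA.eigenvalues_nonneg i)]
  conv_rhs => rw [hA.1.spectral_theorem, Unitary.conjStarAlgAut_apply]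
  calc _ = hA.1.eigenvectorUnitary.1 * diagonal (RCLike.ofReal ∘ (Real.sqrt ·) ∘ hA.1.eigenvalues) *
      ((star hA.1.eigenvectorUnitary : Matrix (Fin n) (Fin n) ℝ) *
      hA.1.eigenvectorUnitary.1) * diagonal (RCLike.ofReal ∘ (Real.sqrt ·) ∘ hA.1.eigenvalues) *
      (star hA.1.eigenvectorUnitary : Matrix (Fin n) (Fin n) ℝ) := by
        simp only [Matrix.mul_assoc]
    _ = _ := by rw [hV, Matrix.mul_one, Matrix.mul_assoc _ (diagonal _) (diagonal _), hD]

/-- **Generic construction of sub-isotropic random vectors.**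
Let `U` be a real symmetric PSD `n×n` matrix and `r` a random vector with independent
coordinates uniform on `{−1,1}` (i.e. distributed as the product of uniform sign measures).
Let `Y = U^{1/2} r`. Then `E[Y_i] = 0`, `E[Y_i Y_j] = U_{ij}`, and if moreover
`η·diag(U) − U ⪰ 0` for some `η ≥ 1`, then `E[(Σ_i c_i Y_i)²] ≤ η·Σ_i c_i²·E[Y_i²]`
for every `c ∈ ℝⁿ`. -/
theorem subisotropic_construction {n : ℕ} (U : Matrix (Fin n) (Fin n) ℝ)
    (hU : U.PosSemidef) {Ω : Type*} [MeasurableSpace Ω] (μ : Measure Ω)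
    [IsProbabilityMeasure μ] (r : Ω → Fin n → ℝ) (hrm : Measurable r)
    (hr : Measure.map r μ = Measure.pi fun _ : Fin n => uniformSign)
    (Y : Ω → Fin n → ℝ) (hY : ∀ ω, Y ω = hU.sqrt *ᵥ r ω) :
    (∀ i, ∫ ω, Y ω i ∂μ = 0) ∧
    (∀ i j, ∫ ω, Y ω i * Y ω j ∂μ = U i j) ∧
    (∀ η : ℝ, 1 ≤ η → (η • Matrix.diagonal (fun i => U i i) - U).PosSemidef →
      ∀ c : Fin n → ℝ,
        ∫ ω, (∑ i, c i * Y ω i) ^ 2 ∂μ ≤ η * ∑ i, (c i) ^ 2 * ∫ ω, (Y ω i) ^ 2 ∂μ) := by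
  set ν := Measure.pi fun _ : Fin n => uniformSign with hν
  set S := hU.sqrt with hSdef
  have hSym : ∀ a b, S a b = S b a := by
    intro a b
    simpa using hU.sqrt_isHermitian'.apply b a
  have hSS : ∀ i j, ∑ k, S i k * S j k = U i j := by
    intro i j
    have h1 : (S * S) i j = U i j := by rw [hU.sqrt_mul_self]
    rw [← h1, Matrix.mul_apply]
    exact Finset.sum_congr rfl fun k _ => by rw [hSym j k]
  -- change of variables
  have cv : ∀ F : (Fin n → ℝ) → ℝ, Measurable F →
      ∫ ω, F (r ω) ∂μ = ∫ x, F x ∂ν := by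
    intro F hF
    rw [← integral_map hrm.aemeasurable hF.aestronglyMeasurable, hr]
  have hYeq : ∀ ω i, Y ω i = ∑ k, S i k * r ω k := by
    intro ω i
    rw [hY ω]
    rfl
  -- second moments
  have mom2 : ∀ i j, ∫ ω, Y ω i * Y ω j ∂μ = U i j := by
    intro i j
    have h1 : ∫ ω, Y ω i * Y ω j ∂μ
        = ∫ ω, (fun x : Fin n → ℝ => (∑ k, S i k * x k) * (∑ l, S j l * x l)) (r ω) ∂μ := by
      refine integral_congr_ae (Filter.Eventually.of_forall fun ω => ?_)
      simp only [hYeq]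
    have hFm : Measurable (fun x : Fin n → ℝ => (∑ k, S i k * x k) * (∑ l, S j l * x l)) := by
      fun_prop
    rw [h1, cv _ hFm, sign_bilinear, hSS]
  refine ⟨?_, mom2, ?_⟩
  · -- first moments
    intro i
    have h1 : ∫ ω, Y ω i ∂μ = ∫ ω, (fun x : Fin n → ℝ => ∑ k, S i k * x k) (r ω) ∂μ := by
      refine integral_congr_ae (Filter.Eventually.of_forall fun ω => ?_)
      simp only [hYeq]
    have hFm : Measurable (fun x : Fin n → ℝ => ∑ k, S i k * x k) := by fun_prop
    rw [h1, cv _ hFm, integral_finset_sum _ (fun k _ => (sign_integrable1 k).const_mul _)]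
    simp_rw [integral_const_mul, sign_moment1, mul_zero, Finset.sum_const_zero]
  · -- sub-isotropy
    intro η hη hPSD c
    set d : Fin n → ℝ := fun k => ∑ i, c i * S i k with hd
    have hsum : ∀ ω, ∑ i, c i * Y ω i = ∑ k, d k * r ω k := by
      intro ω
      calc ∑ i, c i * Y ω i = ∑ i, ∑ k, c i * S i k * r ω k := by
            refine Finset.sum_congr rfl fun i _ => ?_
            rw [hYeq, Finset.mul_sum]
            exact Finset.sum_congr rfl fun k _ => by ring
        _ = ∑ k, ∑ i, c i * S i k * r ω k := Finset.sum_comm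
        _ = ∑ k, d k * r ω k := by
            refine Finset.sum_congr rfl fun k _ => ?_
            simp only [hd]
            rw [Finset.sum_mul]
    have lhs : ∫ ω, (∑ i, c i * Y ω i) ^ 2 ∂μ = ∑ k, d k * d k := by
      have h1 : ∫ ω, (∑ i, c i * Y ω i) ^ 2 ∂μ
          = ∫ ω, (fun x : Fin n → ℝ => (∑ k, d k * x k) * (∑ l, d l * x l)) (r ω) ∂μ := by
        refine integral_congr_ae (Filter.Eventually.of_forall fun ω => ?_)
        simp only [hsum]
        ring
      have hFm : Measurable (fun x : Fin n → ℝ => (∑ k, d k * x k) * (∑ l, d l * x l)) := by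
        fun_prop
      rw [h1, cv _ hFm, sign_bilinear]
    have var : ∀ i, ∫ ω, (Y ω i) ^ 2 ∂μ = U i i := by
      intro i
      have : ∫ ω, (Y ω i) ^ 2 ∂μ = ∫ ω, Y ω i * Y ω i ∂μ := by
        refine integral_congr_ae (Filter.Eventually.of_forall fun ω => ?_)
        ring
      rw [this, mom2]
    rw [lhs]
    simp_rw [var]
    -- ∑ k, d k * d k = c ⬝ᵥ U *ᵥ c
    have key : ∑ k, d k * d k = ∑ i, ∑ j, (c i * c j) * U i j := by
      calc ∑ k, d k * d k
          = ∑ k, ∑ i, ∑ j, (c i * c j) * (S i k * S j k) := by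
            refine Finset.sum_congr rfl fun k _ => ?_
            rw [hd, Finset.sum_mul_sum]
            exact Finset.sum_congr rfl fun i _ => Finset.sum_congr rfl fun j _ => by ring
        _ = ∑ i, ∑ j, (c i * c j) * ∑ k, S i k * S j k := by
            rw [Finset.sum_comm]
            refine Finset.sum_congr rfl fun i _ => ?_
            rw [Finset.sum_comm]
            exact Finset.sum_congr rfl fun j _ => by rw [Finset.mul_sum]
        _ = ∑ i, ∑ j, (c i * c j) * U i j := by simp_rw [hSS]
    rw [key]
    -- use PSD
    have hpos := hPSD.dotProduct_mulVec_nonneg c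
    rw [Matrix.sub_mulVec, dotProduct_sub, Matrix.smul_mulVec, dotProduct_smul] at hpos
    have h2 : dotProduct (star c) ((Matrix.diagonal fun i => U i i) *ᵥ c)
        = ∑ i, c i ^ 2 * U i i := by
      simp only [star_trivial, dotProduct, Matrix.mulVec_diagonal]
      exact Finset.sum_congr rfl fun i _ => by ring
    have h3 : dotProduct (star c) (U *ᵥ c) = ∑ i, ∑ j, (c i * c j) * U i j := by
      have h4 : dotProduct (star c) (U *ᵥ c) = ∑ i, c i * ∑ j, U i j * c j := rfl
      rw [h4]
      simp_rw [Finset.mul_sum]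
      exact Finset.sum_congr rfl fun i _ => Finset.sum_congr rfl fun j _ => by ring
    rw [h2, h3, smul_eq_mul] at hpos
    linarith
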